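/- For any odd prime p and any integer d ≥ 1, the set {θ^{(p,d)}_{a,b} : a, b ∈ ℤ} of formal power series contains at most (p+1)²/4 elements. -/

import Mathlib

noncomputable section

/-- The positive definite quadratic form `Q_d(x,y) = x² + xy + d y²`. -/
def Qform (d : ℕ) (x y : ℤ) : ℤ := x ^ 2 + x * y + (d : ℤ) * y ^ 2

/-- The coset theta series `θ^{(p,d)}_{a,b}`. -/
def cosetTheta (p d : ℕ) (a b : ℤ) : PowerSeries ℤ :=
  PowerSeries.mk fun k =>
    (Set.ncard {mn : ℤ × ℤ |
      Qform d ((p : ℤ) * mn.1 + a) ((p : ℤ) * mn.2 + b) = (k : ℤ)} : ℤ)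

private lemma theta_congr (p d : ℕ) (a b a' b' : ℤ) (e : (ℤ × ℤ) ≃ (ℤ × ℤ))
    (h : ∀ mn : ℤ × ℤ, Qform d ((p:ℤ) * (e mn).1 + a') ((p:ℤ) * (e mn).2 + b')
        = Qform d ((p:ℤ) * mn.1 + a) ((p:ℤ) * mn.2 + b)) :
    cosetTheta p d a' b' = cosetTheta p d a b := by
  ext k
  simp only [cosetTheta, PowerSeries.coeff_mk]
  congr 1
  have hset : {mn : ℤ × ℤ | Qform d ((p:ℤ) * mn.1 + a') ((p:ℤ) * mn.2 + b') = (k:ℤ)}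
      = e '' {mn : ℤ × ℤ | Qform d ((p:ℤ) * mn.1 + a) ((p:ℤ) * mn.2 + b) = (k:ℤ)} := by
    ext mn
    simp only [Set.mem_image, Set.mem_setOf_eq]
    constructor
    · intro hmn
      refine ⟨e.symm mn, ?_, e.apply_symm_apply mn⟩
      have := h (e.symm mn)
      rw [e.apply_symm_apply] at this
      rw [← this]; exact hmn
    · rintro ⟨u, hu, rfl⟩
      rw [h u]; exact hu
  rw [hset, Set.ncard_image_of_injective _ e.injective]

private def negEquiv : (ℤ × ℤ) ≃ (ℤ × ℤ) :=
  ⟨fun mn => (-mn.1, -mn.2), fun mn => (-mn.1, -mn.2),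
    fun mn => by simp, fun mn => by simp⟩

private def gEquiv : (ℤ × ℤ) ≃ (ℤ × ℤ) :=
  ⟨fun mn => (-mn.1 - mn.2, mn.2), fun mn => (-mn.1 - mn.2, mn.2),
    fun mn => by obtain ⟨m, n⟩ := mn; simp only [Prod.mk.injEq]; exact ⟨by ring, trivial⟩,
    fun mn => by obtain ⟨m, n⟩ := mn; simp only [Prod.mk.injEq]; exact ⟨by ring, trivial⟩⟩

private def shiftEquiv' (s t : ℤ) : (ℤ × ℤ) ≃ (ℤ × ℤ) :=
  ⟨fun mn => (mn.1 - s, mn.2 - t), fun mn => (mn.1 + s, mn.2 + t),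
    fun mn => by obtain ⟨m, n⟩ := mn; simp only [Prod.mk.injEq]; constructor <;> ring,
    fun mn => by obtain ⟨m, n⟩ := mn; simp only [Prod.mk.injEq]; constructor <;> ring⟩

private lemma theta_shift (p d : ℕ) (a b s t : ℤ) :
    cosetTheta p d (a + p * s) (b + p * t) = cosetTheta p d a b := by
  apply theta_congr p d a b _ _ (shiftEquiv' s t)
  intro mn
  have h1 : (p:ℤ) * (mn.1 - s) + (a + p * s) = (p:ℤ) * mn.1 + a := by ring
  have h2 : (p:ℤ) * (mn.2 - t) + (b + p * t) = (p:ℤ) * mn.2 + b := by ring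
  simp only [shiftEquiv', Equiv.coe_fn_mk, h1, h2]

private lemma theta_neg (p d : ℕ) (a b : ℤ) :
    cosetTheta p d (-a) (-b) = cosetTheta p d a b := by
  apply theta_congr p d a b _ _ negEquiv
  intro mn
  unfold Qform negEquiv
  simp only [Equiv.coe_fn_mk]
  ring

private lemma theta_g (p d : ℕ) (a b : ℤ) :
    cosetTheta p d (-a - b) b = cosetTheta p d a b := by
  apply theta_congr p d a b _ _ gEquiv
  intro mn
  unfold Qform gEquiv
  simp only [Equiv.coe_fn_mk]
  ring

private lemma theta_mod (p d : ℕ) (a b a' b' : ℤ)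
    (ha : (a : ZMod p) = (a' : ZMod p)) (hb : (b : ZMod p) = (b' : ZMod p)) :
    cosetTheta p d a' b' = cosetTheta p d a b := by
  rw [ZMod.intCast_eq_intCast_iff] at ha hb
  obtain ⟨s, hs⟩ := ha.dvd
  obtain ⟨t, ht⟩ := hb.dvd
  have hA : a' = a + (p:ℤ) * s := by linarith
  have hB : b' = b + (p:ℤ) * t := by linarith
  rw [hA, hB]
  exact theta_shift p d a b s t

private lemma cast_val {p : ℕ} [NeZero p] (x : ZMod p) :
    (((x.val : ℤ)) : ZMod p) = x := by
  push_cast [ZMod.natCast_val, ZMod.cast_id]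
  rfl

section main

variable {p : ℕ} [NeZero p] (d : ℕ)

private def Ftheta (p d : ℕ) (x : ZMod p × ZMod p) : PowerSeries ℤ :=
  cosetTheta p d (x.1.val : ℤ) (x.2.val : ℤ)

private lemma theta_eq_F (a b : ℤ) :
    cosetTheta p d a b = Ftheta p d ((a : ZMod p), (b : ZMod p)) := by
  unfold Ftheta
  exact theta_mod p d _ _ a b (cast_val _) (cast_val _)

private lemma F_neg (x y : ZMod p) : Ftheta p d (-x, -y) = Ftheta p d (x, y) := by
  unfold Ftheta
  have h1 : cosetTheta p d (((-x).val : ℤ)) (((-y).val : ℤ))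
      = cosetTheta p d (-(x.val : ℤ)) (-(y.val : ℤ)) := by
    apply theta_mod
    · push_cast
      simp [ZMod.natCast_val, ZMod.cast_id]
    · push_cast
      simp [ZMod.natCast_val, ZMod.cast_id]
  rw [h1, theta_neg]

private lemma F_g (x y : ZMod p) : Ftheta p d (-x - y, y) = Ftheta p d (x, y) := by
  unfold Ftheta
  have h1 : cosetTheta p d (((-x - y).val : ℤ)) ((y.val : ℤ))
      = cosetTheta p d (-(x.val : ℤ) - (y.val : ℤ)) ((y.val : ℤ)) := by
    apply theta_mod
    · push_cast
      simp [ZMod.natCast_val, ZMod.cast_id]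
    · rfl
  rw [h1, theta_g]

private lemma F_h (x y : ZMod p) : Ftheta p d (x + y, -y) = Ftheta p d (x, y) := by
  have h := F_g d (-x) (-y)
  have e1 : -(-x) - (-y) = x + y := by ring
  rw [e1] at h
  rw [h, F_neg]

private lemma neg_val_le (u : ZMod p) (h : ¬ u.val ≤ p / 2) : (-u).val ≤ p / 2 := by
  have hu : u ≠ 0 := by rintro rfl; simp [ZMod.val_zero] at h
  have h1 : (-u).val = p - u.val := by rw [ZMod.neg_val]; simp [hu]
  have h2 : u.val < p := ZMod.val_lt u
  omega

end main

theorem stmt3 (p : ℕ) (hp : p.Prime) (hodd : Odd p) (d : ℕ) (hd : 1 ≤ d) :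
    (Set.range fun ab : ℤ × ℤ => cosetTheta p d ab.1 ab.2).Finite ∧
    (Set.range fun ab : ℤ × ℤ => cosetTheta p d ab.1 ab.2).ncard ≤ (p + 1) ^ 2 / 4 := by
  haveI : NeZero p := ⟨hp.ne_zero⟩
  haveI : Fact p.Prime := ⟨hp⟩
  set R : Set (ZMod p × ZMod p) :=
    {v | v.2.val ≤ p / 2 ∧ (2 * v.1 + v.2).val ≤ p / 2} with hR
  have hRfin : R.Finite := Set.toFinite R
  -- every theta series is F of an element of R
  have hsub : (Set.range fun ab : ℤ × ℤ => cosetTheta p d ab.1 ab.2) ⊆ Ftheta p d '' R := by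
    rintro _ ⟨⟨a, b⟩, rfl⟩
    simp only
    set x : ZMod p := (a : ZMod p)
    set y : ZMod p := (b : ZMod p)
    have h0 : cosetTheta p d a b = Ftheta p d (x, y) := theta_eq_F d a b
    by_cases hy : y.val ≤ p / 2
    · by_cases hx : (2 * x + y).val ≤ p / 2
      · exact ⟨(x, y), ⟨hy, hx⟩, h0.symm⟩
      · refine ⟨(-x - y, y), ⟨hy, ?_⟩, ?_⟩
        · have e1 : 2 * (-x - y) + y = -(2 * x + y) := by ring
          rw [e1]
          exact neg_val_le _ hx
        · rw [h0]; exact F_g d x y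
    · by_cases hx : (2 * (x + y) + -y).val ≤ p / 2
      · refine ⟨(x + y, -y), ⟨neg_val_le _ hy, hx⟩, ?_⟩
        rw [h0]; exact F_h d x y
      · refine ⟨(-(x + y) - -y, -y), ⟨neg_val_le _ hy, ?_⟩, ?_⟩
        · have e1 : 2 * (-(x + y) - -y) + -y = -(2 * (x + y) + -y) := by ring
          rw [e1]
          exact neg_val_le _ hx
        · rw [h0, ← F_h d x y]; exact F_g d (x + y) (-y)
  constructor
  · exact Set.Finite.subset (hRfin.image _) hsub
  · have two_ne : (2 : ZMod p) ≠ 0 := by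
      have hnd : ¬ (p ∣ 2) := by
        intro hdvd
        have hpe := (Nat.prime_dvd_prime_iff_eq hp Nat.prime_two).mp hdvd
        obtain ⟨k, hk⟩ := hodd
        omega
      intro h2
      have h3 : ((2 : ℕ) : ZMod p) = 0 := by exact_mod_cast h2
      rw [ZMod.natCast_eq_zero_iff] at h3
      exact hnd h3
    have hmain : R.ncard ≤ (p / 2 + 1) * (p / 2 + 1) := by
      have hle : R.ncard ≤ (Set.univ : Set (Fin (p/2+1) × Fin (p/2+1))).ncard := by
        apply Set.ncard_le_ncard_of_injOn
          (fun v => (⟨min (2 * v.1 + v.2).val (p/2), by omega⟩,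
                     ⟨min v.2.val (p/2), by omega⟩))
        · intro v _; exact Set.mem_univ _
        · intro v hv w hw heq
          obtain ⟨hv1, hv2⟩ := hv
          obtain ⟨hw1, hw2⟩ := hw
          simp only [Prod.mk.injEq, Fin.mk.injEq] at heq
          rw [min_eq_left hv2, min_eq_left hw2, min_eq_left hv1, min_eq_left hw1] at heq
          have e2 : v.2 = w.2 := ZMod.val_injective p heq.2
          have e1 : 2 * v.1 + v.2 = 2 * w.1 + w.2 := ZMod.val_injective p heq.1
          rw [e2] at e1
          have : (2 : ZMod p) * v.1 = 2 * w.1 := by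
            have := add_right_cancel e1
            exact this
          have hx : v.1 = w.1 := mul_left_cancel₀ two_ne this
          exact Prod.ext hx e2
      rw [Set.ncard_univ] at hle
      simpa [Nat.card_eq_fintype_card] using hle
    calc (Set.range fun ab : ℤ × ℤ => cosetTheta p d ab.1 ab.2).ncard
        ≤ (Ftheta p d '' R).ncard := Set.ncard_le_ncard hsub (hRfin.image _)
      _ ≤ R.ncard := Set.ncard_image_le hRfin
      _ ≤ (p / 2 + 1) * (p / 2 + 1) := hmain
      _ ≤ (p + 1) ^ 2 / 4 := by
          obtain ⟨k, hk⟩ := hodd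
          subst hk
          have h2 : (2 * k + 1) / 2 = k := by omega
          rw [h2]
          have h3 : (2 * k + 1 + 1) ^ 2 = 4 * ((k + 1) * (k + 1)) := by ring
          rw [h3, Nat.mul_div_cancel_left _ (by norm_num)]
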